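/- Let p, q > 0 with p·q > 1 and let c₁ > 0, c₂ > 0. Then the system w'(t) = z(t)^p, z'(t) = w(t)^q with w(0) = c₁, z(0) = c₂ has no global solution: there is no pair of differentiable functions w, z : [0,∞) → [0,∞) satisfying these equations for all t ≥ 0, i.e., every solution blows up in finite time. -/

import Mathlib

open Set MeasureTheory Filter

private lemma mono_aux {f f' : ℝ → ℝ} {a : ℝ}
    (hf : ∀ t, a ≤ t → HasDerivAt f (f' t) t)
    (h0 : ∀ t, a ≤ t → 0 ≤ f' t) :
    ∀ t, a ≤ t → f a ≤ f t := by
  intro t ht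
  have hmono : MonotoneOn f (Ici a) := by
    apply monotoneOn_of_deriv_nonneg (convex_Ici a)
      (fun x hx => (hf x hx).continuousAt.continuousWithinAt)
    · intro x hx
      have hx' : a < x := by simpa [interior_Ici] using hx
      exact (hf x hx'.le).differentiableAt.differentiableWithinAt
    · intro x hx
      have hx' : a < x := by simpa [interior_Ici] using hx
      rw [(hf x hx'.le).deriv]
      exact h0 x hx'.le
  exact hmono self_mem_Ici ht ht

private lemma anti_aux {f f' : ℝ → ℝ} {a : ℝ}
    (hf : ∀ t, a ≤ t → HasDerivAt f (f' t) t)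
    (h0 : ∀ t, a ≤ t → f' t ≤ 0) :
    ∀ t, a ≤ t → f t ≤ f a := by
  intro t ht
  have hanti : AntitoneOn f (Ici a) := by
    apply antitoneOn_of_deriv_nonpos (convex_Ici a)
      (fun x hx => (hf x hx).continuousAt.continuousWithinAt)
    · intro x hx
      have hx' : a < x := by simpa [interior_Ici] using hx
      exact (hf x hx'.le).differentiableAt.differentiableWithinAt
    · intro x hx
      have hx' : a < x := by simpa [interior_Ici] using hx
      rw [(hf x hx'.le).deriv]
      exact h0 x hx'.le
  exact hanti self_mem_Ici ht ht

/-- Example 2.1 of the paper (blowup half): if `p q > 1` and `c₁, c₂ > 0`, then the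
system `w' = z^p`, `z' = w^q` with `w(0) = c₁`, `z(0) = c₂` has no global solution,
i.e. every solution blows up in finite time. -/
theorem blowup_power_system
    (p q c₁ c₂ : ℝ) (hp : 0 < p) (hq : 0 < q) (hpq : 1 < p * q)
    (hc₁ : 0 < c₁) (hc₂ : 0 < c₂) :
    ¬ ∃ w z : ℝ → ℝ,
        (∀ t : ℝ, 0 ≤ t → 0 ≤ w t ∧ 0 ≤ z t) ∧
        w 0 = c₁ ∧ z 0 = c₂ ∧
        (∀ t : ℝ, 0 ≤ t →
          HasDerivAt w (z t ^ p) t ∧ HasDerivAt z (w t ^ q) t) := by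
  rintro ⟨w, z, hnn, hw0, hz0, hd⟩
  have hp1 : (0:ℝ) < p + 1 := by linarith
  have hq1 : (0:ℝ) < q + 1 := by linarith
  have hwn : ∀ t, 0 ≤ t → 0 ≤ w t := fun t ht => (hnn t ht).1
  have hzn : ∀ t, 0 ≤ t → 0 ≤ z t := fun t ht => (hnn t ht).2
  -- w and z are bounded below by their initial values
  have hwlb : ∀ t, 0 ≤ t → c₁ ≤ w t := by
    intro t ht
    have := mono_aux (f' := fun s => z s ^ p) (a := 0)
      (fun s hs => (hd s hs).1) (fun s hs => Real.rpow_nonneg (hzn s hs) p) t ht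
    rwa [hw0] at this
  have hzlb : ∀ t, 0 ≤ t → c₂ ≤ z t := by
    intro t ht
    have := mono_aux (f' := fun s => w s ^ q) (a := 0)
      (fun s hs => (hd s hs).2) (fun s hs => Real.rpow_nonneg (hwn s hs) q) t ht
    rwa [hz0] at this
  have hwpos : ∀ t, 0 ≤ t → 0 < w t := fun t ht => lt_of_lt_of_le hc₁ (hwlb t ht)
  have hzpos : ∀ t, 0 ≤ t → 0 < z t := fun t ht => lt_of_lt_of_le hc₂ (hzlb t ht)
  -- conservation law
  have hEd : ∀ t, 0 ≤ t →
      HasDerivAt (fun s => z s ^ (p+1) * (q+1) - w s ^ (q+1) * (p+1)) 0 t := by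
    intro t ht
    have h1 : HasDerivAt (fun s => z s ^ (p+1)) (w t ^ q * (p+1) * z t ^ (p+1-1)) t :=
      (hd t ht).2.rpow_const (Or.inr (by linarith))
    have h2 : HasDerivAt (fun s => w s ^ (q+1)) (z t ^ p * (q+1) * w t ^ (q+1-1)) t :=
      (hd t ht).1.rpow_const (Or.inr (by linarith))
    have e1 : p + 1 - 1 = p := by ring
    have e2 : q + 1 - 1 = q := by ring
    rw [e1] at h1
    rw [e2] at h2
    have := (h1.mul_const (q+1)).sub (h2.mul_const (p+1))
    exact this.congr_deriv (by ring)
  have hEc : ∀ t, 0 ≤ t →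
      z t ^ (p+1) * (q+1) - w t ^ (q+1) * (p+1)
        = c₂ ^ (p+1) * (q+1) - c₁ ^ (q+1) * (p+1) := by
    intro t ht
    have h1 := anti_aux (f' := fun _ => (0:ℝ)) hEd (fun _ _ => le_refl 0) t ht
    have h2 := mono_aux (f' := fun _ => (0:ℝ)) hEd (fun _ _ => le_refl 0) t ht
    have : z t ^ (p+1) * (q+1) - w t ^ (q+1) * (p+1)
        = z 0 ^ (p+1) * (q+1) - w 0 ^ (q+1) * (p+1) := le_antisymm h1 h2
    rwa [hw0, hz0] at this
  -- linear growth of w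
  have hc2p : 0 < c₂ ^ p := Real.rpow_pos_of_pos hc₂ p
  have hlin : ∀ t, 0 ≤ t → c₁ + c₂ ^ p * t ≤ w t := by
    intro t ht
    have := mono_aux (f := fun s => w s - c₂ ^ p * s)
      (f' := fun s => z s ^ p - c₂ ^ p) (a := 0)
      (fun s hs => (hd s hs).1.sub (by simpa using (hasDerivAt_id s).const_mul (c₂ ^ p)))
      (fun s hs => sub_nonneg.mpr (Real.rpow_le_rpow hc₂.le (hzlb s hs) hp.le)) t ht
    simp only [hw0] at this
    linarith [this]
  set T₀ := (2*c₁)/(c₂ ^ p) with hT₀def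
  have hT₀ : 0 < T₀ := div_pos (by linarith) hc2p
  have hwT : ∀ t, T₀ ≤ t → 2*c₁ ≤ w t := by
    intro t ht
    have h0t : 0 ≤ t := le_trans hT₀.le ht
    have h1 := hlin t h0t
    have h2 : c₂ ^ p * T₀ ≤ c₂ ^ p * t := mul_le_mul_of_nonneg_left ht hc2p.le
    have h3 : c₂ ^ p * T₀ = 2*c₁ := by
      rw [hT₀def]; field_simp
    linarith
  -- key bound: z^(p+1) ≥ K w^(q+1)  for t ≥ T₀
  set K := (p+1)/(2*(q+1)) with hKdef
  have hK : 0 < K := div_pos hp1 (by linarith)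
  have hzw : ∀ t, T₀ ≤ t → K * w t ^ (q+1) ≤ z t ^ (p+1) := by
    intro t ht
    have h0t : 0 ≤ t := le_trans hT₀.le ht
    have hE := hEc t h0t
    have hB : 2 * c₁ ^ (q+1) ≤ w t ^ (q+1) := by
      have h1 : (2*c₁) ^ (q+1) ≤ w t ^ (q+1) :=
        Real.rpow_le_rpow (by positivity) (hwT t ht) (by linarith)
      have h2 : ((2:ℝ)*c₁) ^ (q+1) = (2:ℝ) ^ (q+1) * c₁ ^ (q+1) :=
        Real.mul_rpow (by norm_num) hc₁.le
      have h3 : (2:ℝ) ≤ 2 ^ (q+1) := by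
        calc (2:ℝ) = 2 ^ (1:ℝ) := (Real.rpow_one 2).symm
        _ ≤ 2 ^ (q+1) := Real.rpow_le_rpow_of_exponent_le one_le_two (by linarith)
      have hc : 0 < c₁ ^ (q+1) := Real.rpow_pos_of_pos hc₁ (q+1)
      nlinarith
    have hcz : 0 < c₂ ^ (p+1) := Real.rpow_pos_of_pos hc₂ (p+1)
    rw [hKdef, div_mul_eq_mul_div, div_le_iff₀ (by linarith : (0:ℝ) < 2*(q+1))]
    nlinarith [hB, hcz, hE, Real.rpow_pos_of_pos hc₁ (q+1)]
  -- superlinear differential inequality: w' = z^p ≥ k * w^α  with α > 1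
  set α := p*(q+1)/(p+1) with hαdef
  have hα : 1 < α := by rw [hαdef, lt_div_iff₀ hp1]; nlinarith
  set k := K ^ (p/(p+1)) with hkdef
  have hk : 0 < k := Real.rpow_pos_of_pos hK _
  have hkey : ∀ t, T₀ ≤ t → k * w t ^ α ≤ z t ^ p := by
    intro t ht
    have h0t : 0 ≤ t := le_trans hT₀.le ht
    have hz0' : 0 ≤ z t := hzn t h0t
    have hw0' : 0 ≤ w t := hwn t h0t
    calc k * w t ^ α = (K * w t ^ (q+1)) ^ (p/(p+1)) := by
          rw [Real.mul_rpow hK.le (Real.rpow_nonneg hw0' _), ← Real.rpow_mul hw0']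
          congr 2
          rw [hαdef]; field_simp
      _ ≤ (z t ^ (p+1)) ^ (p/(p+1)) :=
          Real.rpow_le_rpow (by positivity) (hzw t ht) (by positivity)
      _ = z t ^ p := by
          rw [← Real.rpow_mul hz0']
          congr 1
          field_simp
  -- blowup argument with v = w^(1-α)
  have hden : 0 < (α-1)*k := mul_pos (by linarith) hk
  have hhd : ∀ t, T₀ ≤ t →
      HasDerivAt (fun s => w s ^ (1-α) + (α-1)*k*s)
        (z t ^ p * (1-α) * w t ^ (1-α-1) + (α-1)*k) t := by
    intro t ht
    have h0t : 0 ≤ t := le_trans hT₀.le ht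
    exact ((hd t h0t).1.rpow_const (Or.inl (hwpos t h0t).ne')).add
      (by simpa using (hasDerivAt_id t).const_mul ((α-1)*k))
  have hnonpos : ∀ t, T₀ ≤ t →
      z t ^ p * (1-α) * w t ^ (1-α-1) + (α-1)*k ≤ 0 := by
    intro t ht
    have h0t : 0 ≤ t := le_trans hT₀.le ht
    have hw' : 0 < w t := hwpos t h0t
    have hwα : 0 < w t ^ α := Real.rpow_pos_of_pos hw' α
    have hneg : w t ^ (1-α-1) = (w t ^ α)⁻¹ := by
      rw [show (1-α-1) = -α by ring, Real.rpow_neg hw'.le]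
    rw [hneg]
    have h1 : k ≤ z t ^ p / w t ^ α := (le_div_iff₀ hwα).mpr (hkey t ht)
    have h2 : (α-1)*k ≤ (α-1)*(z t ^ p / w t ^ α) :=
      mul_le_mul_of_nonneg_left h1 (by linarith)
    have h3 : z t ^ p * (1-α) * (w t ^ α)⁻¹ = -((α-1) * (z t ^ p / w t ^ α)) := by
      field_simp
      ring
    linarith [h2, h3.le, h3.ge]
  have hmono := anti_aux hhd hnonpos
  -- pick a time where v would be negative
  have hvT : 0 < w T₀ ^ (1-α) := Real.rpow_pos_of_pos (hwpos T₀ hT₀.le) _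
  set t₁ := T₀ + (w T₀ ^ (1-α) + 1)/((α-1)*k) with ht₁def
  have ht₁ : T₀ ≤ t₁ :=
    le_add_of_nonneg_right (div_nonneg (by linarith) hden.le)
  have hvpos : 0 < w t₁ ^ (1-α) :=
    Real.rpow_pos_of_pos (hwpos t₁ (le_trans hT₀.le ht₁)) _
  have H := hmono t₁ ht₁
  have hcancel : (α-1)*k * ((w T₀ ^ (1-α) + 1)/((α-1)*k)) = w T₀ ^ (1-α) + 1 :=
    mul_div_cancel₀ _ hden.ne'
  rw [ht₁def] at H
  nlinarith [H, hcancel, hvpos]
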